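/- Let σ₀, σ_s, σ_h > 0 and μ_h ∈ ℝ. Define σ² = σ₀²σ_s²/(σ₀² + σ_s²), σ₁² = σ² + σ⁴/σ_s², σ_φ = 2·√(σ₁² + (σ⁴/σ₀⁴)σ_h²), μ_φ(μ) = 2σ²(μ/σ_s² + μ_h/σ₀²), and g(μ) = Φ(−μ_φ(μ)/σ_φ), where Φ is the standard normal cumulative distribution function. Then sup_{μ∈ℝ} |g′(μ)| ≤ 1 if and only if σ_s² ≥ (−4πσ₀⁴ + √(16π²σ₀⁸ + 8π(σ₀² + σ_h²)σ₀⁴)) / (4π(σ₀² + σ_h²)). Moreover, if this inequality is strict, then g is a contraction on ℝ, g has a unique fixed point μ* ∈ (0,1), and for every initial value μ⁰ ∈ ℝ the iterates μ^t = g(μ^{t−1}) converge to μ* as t → ∞. -/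

import Mathlib

open MeasureTheory Filter

/-- Standard normal density ϕ(y) = (2π)^{−1/2} e^{−y²/2}. -/
noncomputable def stdNormalPdf (y : ℝ) : ℝ :=
  (2 * Real.pi) ^ (-(1 : ℝ) / 2) * Real.exp (-y ^ 2 / 2)

/-- Standard normal cumulative distribution function Φ. -/
noncomputable def stdNormalCdf (y : ℝ) : ℝ :=
  ∫ u in Set.Iio y, stdNormalPdf u

lemma phi0_eq : ((2 * Real.pi) ^ (-(1 : ℝ) / 2) : ℝ) = (Real.sqrt (2 * Real.pi))⁻¹ := by
  have h2π : (0 : ℝ) ≤ 2 * Real.pi := by positivity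
  rw [Real.sqrt_eq_rpow, ← Real.rpow_neg h2π]
  norm_num

lemma stdNormalPdf_eq_gaussian : stdNormalPdf = ProbabilityTheory.gaussianPDFReal 0 1 := by
  funext x
  rw [stdNormalPdf, ProbabilityTheory.gaussianPDFReal, phi0_eq]
  norm_num

lemma stdNormalPdf_pos (y : ℝ) : 0 < stdNormalPdf y := by
  rw [stdNormalPdf]; positivity

lemma stdNormalPdf_continuous : Continuous stdNormalPdf := by
  unfold stdNormalPdf; fun_prop

lemma stdNormalPdf_le (y : ℝ) : stdNormalPdf y ≤ stdNormalPdf 0 := by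
  unfold stdNormalPdf
  have h1 : Real.exp (-y ^ 2 / 2) ≤ Real.exp (-(0 : ℝ) ^ 2 / 2) := by
    apply Real.exp_le_exp.2; nlinarith [sq_nonneg y]
  have h2 : (0 : ℝ) ≤ (2 * Real.pi) ^ (-(1 : ℝ) / 2) := by positivity
  exact mul_le_mul_of_nonneg_left h1 h2

lemma stdNormalPdf_integrable : Integrable stdNormalPdf := by
  rw [stdNormalPdf_eq_gaussian]
  exact ProbabilityTheory.integrable_gaussianPDFReal 0 1

lemma stdNormalPdf_integral : ∫ u, stdNormalPdf u = 1 := by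
  rw [stdNormalPdf_eq_gaussian]
  exact ProbabilityTheory.integral_gaussianPDFReal_eq_one 0 one_ne_zero

lemma stdNormalCdf_hasDerivAt (y : ℝ) : HasDerivAt stdNormalCdf (stdNormalPdf y) y := by
  have hint := stdNormalPdf_integrable
  have key : ∀ z : ℝ, stdNormalCdf z =
      (∫ u in Set.Iic (0 : ℝ), stdNormalPdf u) + ∫ u in (0 : ℝ)..z, stdNormalPdf u := by
    intro z
    rw [stdNormalCdf, setIntegral_congr_set Iio_ae_eq_Iic,
      ← intervalIntegral.integral_Iic_sub_Iic hint.integrableOn hint.integrableOn]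
    ring
  have h2 : HasDerivAt (fun z : ℝ => ∫ u in (0 : ℝ)..z, stdNormalPdf u) (stdNormalPdf y) y :=
    intervalIntegral.integral_hasDerivAt_right hint.intervalIntegrable
      (stdNormalPdf_continuous.stronglyMeasurableAtFilter _ _)
      stdNormalPdf_continuous.continuousAt
  have h3 := h2.const_add (∫ u in Set.Iic (0 : ℝ), stdNormalPdf u)
  exact h3.congr_of_eventuallyEq (Filter.Eventually.of_forall key)

lemma stdNormalCdf_pos (y : ℝ) : 0 < stdNormalCdf y := by
  rw [stdNormalCdf]
  rw [setIntegral_pos_iff_support_of_nonneg_ae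
    (Filter.Eventually.of_forall fun x => (stdNormalPdf_pos x).le)
    stdNormalPdf_integrable.integrableOn]
  have hsupp : Function.support stdNormalPdf = Set.univ :=
    Set.eq_univ_of_forall fun x => (stdNormalPdf_pos x).ne'
  rw [hsupp, Set.univ_inter, Real.volume_Iio]
  simp

lemma stdNormalCdf_lt_one (y : ℝ) : stdNormalCdf y < 1 := by
  have hint := stdNormalPdf_integrable
  have hsum := intervalIntegral.integral_Iio_add_Ici (μ := volume) (b := y)
    hint.integrableOn hint.integrableOn
  rw [stdNormalPdf_integral] at hsum
  have hpos : 0 < ∫ u in Set.Ici y, stdNormalPdf u := by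
    rw [setIntegral_pos_iff_support_of_nonneg_ae
      (Filter.Eventually.of_forall fun x => (stdNormalPdf_pos x).le)
      hint.integrableOn]
    have hsupp : Function.support stdNormalPdf = Set.univ :=
      Set.eq_univ_of_forall fun x => (stdNormalPdf_pos x).ne'
    rw [hsupp, Set.univ_inter, Real.volume_Ici]
    simp
  rw [stdNormalCdf]
  linarith

lemma stdNormalPdf_zero : stdNormalPdf 0 = (Real.sqrt (2 * Real.pi))⁻¹ := by
  rw [stdNormalPdf, phi0_eq]
  norm_num

/-- Quadratic root criterion: for a quadratic `α S² + β S − γ` with positive coefficients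
and positive `γ`, the value is nonneg (resp. pos) iff `S` is at least (resp. greater than)
the positive root `c`. -/
lemma quad_root {α β γ S : ℝ} (hα : 0 < α) (hβ : 0 < β) (hγ : 0 < γ) (hS : 0 < S)
    {c : ℝ} (hc : c = (-β + Real.sqrt (β ^ 2 + 4 * α * γ)) / (2 * α)) :
    (γ ≤ α * S ^ 2 + β * S ↔ c ≤ S) ∧ (γ < α * S ^ 2 + β * S ↔ c < S) := by
  set D := Real.sqrt (β ^ 2 + 4 * α * γ) with hDdef
  have hD0 : 0 ≤ D := Real.sqrt_nonneg _
  have hD2 : D ^ 2 = β ^ 2 + 4 * α * γ := Real.sq_sqrt (by positivity)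
  have hDβ : β < D := by nlinarith
  have hceq : 2 * α * c = -β + D := by
    rw [hc]; field_simp
  have hcpos : 0 < c := by nlinarith
  have hDval : D = 2 * α * c + β := by linarith
  have hroot : α * c ^ 2 + β * c = γ := by
    have h1 : (2 * α * c + β) ^ 2 = β ^ 2 + 4 * α * γ := by rw [← hDval]; exact hD2
    nlinarith [h1]
  constructor
  · constructor
    · intro h
      by_contra hlt
      push_neg at hlt
      have hprod : 0 < (c - S) * (α * S + α * c + β) :=
        mul_pos (by linarith) (by positivity)
      nlinarith [hprod, hroot]
    · intro h
      have hprod : 0 ≤ (S - c) * (α * S + α * c + β) :=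
        mul_nonneg (by linarith) (by positivity)
      nlinarith [hprod, hroot]
  · constructor
    · intro h
      by_contra hle
      push_neg at hle
      have hprod : 0 ≤ (c - S) * (α * S + α * c + β) :=
        mul_nonneg (by linarith) (by positivity)
      nlinarith [hprod, hroot]
    · intro h
      have hprod : 0 < (S - c) * (α * S + α * c + β) :=
        mul_pos (by linarith) (by positivity)
      nlinarith [hprod, hroot]

/-- in the minority game, sup_μ |g′(μ)| ≤ 1 iff
σ_s² ≥ (−4πσ₀⁴ + √(16π²σ₀⁸ + 8π(σ₀² + σ_h²)σ₀⁴))/(4π(σ₀² + σ_h²)); and when the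
inequality is strict, g is a contraction with a unique fixed point μ* ∈ (0,1) to which
all iterates μ^t = g(μ^{t−1}) converge. -/
theorem stmt_14 (σ0 σs σh μh : ℝ) (h0 : 0 < σ0) (hs : 0 < σs) (hh : 0 < σh)
    (σ2 σ12 σφ : ℝ)
    (hσ2 : σ2 = σ0 ^ 2 * σs ^ 2 / (σ0 ^ 2 + σs ^ 2))
    (hσ12 : σ12 = σ2 + σ2 ^ 2 / σs ^ 2)
    (hσφ : σφ = 2 * Real.sqrt (σ12 + (σ2 ^ 2 / σ0 ^ 4) * σh ^ 2))
    (μφ : ℝ → ℝ) (hμφ : ∀ μ, μφ μ = 2 * σ2 * (μ / σs ^ 2 + μh / σ0 ^ 2))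
    (g : ℝ → ℝ) (hg : ∀ μ, g μ = stdNormalCdf (-μφ μ / σφ))
    (c : ℝ)
    (hc : c = (-4 * Real.pi * σ0 ^ 4 +
        Real.sqrt (16 * Real.pi ^ 2 * σ0 ^ 8 +
          8 * Real.pi * (σ0 ^ 2 + σh ^ 2) * σ0 ^ 4)) /
      (4 * Real.pi * (σ0 ^ 2 + σh ^ 2))) :
    ((⨆ μ : ℝ, |deriv g μ|) ≤ 1 ↔ c ≤ σs ^ 2) ∧
    (c < σs ^ 2 →
      (∃ L : NNReal, L < 1 ∧ LipschitzWith L g) ∧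
      ∃ μstar : ℝ, g μstar = μstar ∧ μstar ∈ Set.Ioo (0 : ℝ) 1 ∧
        (∀ μ' : ℝ, g μ' = μ' → μ' = μstar) ∧
        ∀ μ0 : ℝ, Tendsto (fun t : ℕ => g^[t] μ0) atTop (nhds μstar)) := by
  have hπ := Real.pi_pos
  have hA : 0 < σ0 ^ 2 := by positivity
  have hS : 0 < σs ^ 2 := by positivity
  have hH : 0 < σh ^ 2 := by positivity
  have hAS : 0 < σ0 ^ 2 + σs ^ 2 := by positivity
  have hσ2pos : 0 < σ2 := by rw [hσ2]; positivity
  -- Q = 2σ0⁴ + σ0²σs² + σs²σh²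
  set Q : ℝ := 2 * σ0 ^ 4 + σ0 ^ 2 * σs ^ 2 + σs ^ 2 * σh ^ 2 with hQdef
  have hQpos : 0 < Q := by rw [hQdef]; positivity
  have hSQ : 0 < σs ^ 2 * Q := mul_pos hS hQpos
  have hsqSQ : 0 < Real.sqrt (σs ^ 2 * Q) := Real.sqrt_pos.2 hSQ
  -- simplified form of σφ
  have harg : σ12 + σ2 ^ 2 / σ0 ^ 4 * σh ^ 2 = σs ^ 2 * Q / (σ0 ^ 2 + σs ^ 2) ^ 2 := by
    rw [hσ12, hσ2, hQdef]
    field_simp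
    ring
  have hσφ' : σφ = 2 * Real.sqrt (σs ^ 2 * Q) / (σ0 ^ 2 + σs ^ 2) := by
    rw [hσφ, harg,
      show σs ^ 2 * Q / (σ0 ^ 2 + σs ^ 2) ^ 2
          = (Real.sqrt (σs ^ 2 * Q) / (σ0 ^ 2 + σs ^ 2)) ^ 2 by
        rw [div_pow, Real.sq_sqrt hSQ.le],
      Real.sqrt_sq (by positivity)]
    ring
  have hσφpos : 0 < σφ := by rw [hσφ']; positivity
  -- affine form of the argument of Φ
  set a : ℝ := -(2 * σ2 / (σs ^ 2 * σφ)) with hadef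
  set b : ℝ := -(2 * σ2 * μh / (σ0 ^ 2 * σφ)) with hbdef
  have ha_neg : a < 0 := by
    rw [hadef]
    have : 0 < 2 * σ2 / (σs ^ 2 * σφ) := by positivity
    linarith
  have hgab : ∀ μ, g μ = stdNormalCdf (a * μ + b) := by
    intro μ
    rw [hg, hμφ]
    congr 1
    rw [hadef, hbdef]
    field_simp
    ring
  -- derivative of g
  have hderiv : ∀ μ : ℝ, HasDerivAt g (stdNormalPdf (a * μ + b) * a) μ := by
    intro μ
    have hlin : HasDerivAt (fun z : ℝ => a * z + b) a μ := by
      simpa using ((hasDerivAt_id μ).const_mul a).add_const b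
    have := (stdNormalCdf_hasDerivAt (a * μ + b)).comp μ hlin
    exact this.congr_of_eventuallyEq (Filter.Eventually.of_forall fun z => hgab z)
  have hderiv_eq : ∀ μ : ℝ, deriv g μ = stdNormalPdf (a * μ + b) * a :=
    fun μ => (hderiv μ).deriv
  -- the sup of |g'|
  set k : ℝ := stdNormalPdf 0 * (2 * σ2 / (σs ^ 2 * σφ)) with hkdef
  have hkpos : 0 < k := by
    rw [hkdef]
    have := stdNormalPdf_pos 0
    positivity
  have hbound : ∀ μ : ℝ, |deriv g μ| ≤ k := by
    intro μ
    rw [hderiv_eq, abs_mul, abs_of_pos (stdNormalPdf_pos _), abs_of_neg ha_neg, hkdef,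
      hadef]
    rw [neg_neg]
    exact mul_le_mul_of_nonneg_right (stdNormalPdf_le _) (by positivity)
  have ha_ne : a ≠ 0 := ha_neg.ne
  have hattain : |deriv g (-b / a)| = k := by
    rw [hderiv_eq]
    have : a * (-b / a) + b = 0 := by
      field_simp
      ring
    rw [this, abs_mul, abs_of_pos (stdNormalPdf_pos _), abs_of_neg ha_neg, hkdef, hadef,
      neg_neg]
  have hbdd : BddAbove (Set.range fun μ : ℝ => |deriv g μ|) := by
    refine ⟨k, ?_⟩
    rintro x ⟨μ, rfl⟩
    exact hbound μ
  have hsup_iff : (⨆ μ : ℝ, |deriv g μ|) ≤ 1 ↔ k ≤ 1 := by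
    constructor
    · intro h
      calc k = |deriv g (-b / a)| := hattain.symm
        _ ≤ ⨆ μ : ℝ, |deriv g μ| :=
          le_ciSup (f := fun μ : ℝ => |deriv g μ|) hbdd (-b / a)
        _ ≤ 1 := h
    · intro h
      exact ciSup_le (f := fun μ : ℝ => |deriv g μ|) fun μ => (hbound μ).trans h
  -- explicit value of k
  have hsqne : Real.sqrt (σs ^ 2 * Q) ≠ 0 := hsqSQ.ne'
  have h2πsq : (0:ℝ) < Real.sqrt (2 * Real.pi) := Real.sqrt_pos.2 (by positivity)
  have hk : k = σ0 ^ 2 / (Real.sqrt (2 * Real.pi) * Real.sqrt (σs ^ 2 * Q)) := by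
    rw [hkdef, stdNormalPdf_zero, hσ2, hσφ']
    field_simp
  set R : ℝ := Real.sqrt (2 * Real.pi) * Real.sqrt (σs ^ 2 * Q) with hRdef
  have hRpos : 0 < R := mul_pos h2πsq hsqSQ
  have hR2 : R ^ 2 = 2 * Real.pi * (σs ^ 2 * Q) := by
    rw [hRdef, mul_pow, Real.sq_sqrt (by positivity), Real.sq_sqrt hSQ.le]
  -- quadratic criterion
  have hα : (0:ℝ) < 2 * Real.pi * (σ0 ^ 2 + σh ^ 2) := by positivity
  have hβ : (0:ℝ) < 4 * Real.pi * σ0 ^ 4 := by positivity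
  have hγ : (0:ℝ) < σ0 ^ 4 := by positivity
  have hc' : c = (-(4 * Real.pi * σ0 ^ 4) +
      Real.sqrt ((4 * Real.pi * σ0 ^ 4) ^ 2 +
        4 * (2 * Real.pi * (σ0 ^ 2 + σh ^ 2)) * σ0 ^ 4)) /
      (2 * (2 * Real.pi * (σ0 ^ 2 + σh ^ 2))) := by
    rw [hc, show 16 * Real.pi ^ 2 * σ0 ^ 8 + 8 * Real.pi * (σ0 ^ 2 + σh ^ 2) * σ0 ^ 4
        = (4 * Real.pi * σ0 ^ 4) ^ 2 + 4 * (2 * Real.pi * (σ0 ^ 2 + σh ^ 2)) * σ0 ^ 4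
        from by ring]
    ring_nf
  have hquad := quad_root hα hβ hγ hS hc'
  have hrhs : 2 * Real.pi * (σ0 ^ 2 + σh ^ 2) * (σs ^ 2) ^ 2 +
      4 * Real.pi * σ0 ^ 4 * σs ^ 2 = 2 * Real.pi * (σs ^ 2 * Q) := by
    rw [hQdef]; ring
  -- comparing σ0² with R
  have hAR : (σ0 ^ 2 ≤ R) ↔ σ0 ^ 4 ≤ 2 * Real.pi * (σ0 ^ 2 + σh ^ 2) * (σs ^ 2) ^ 2 +
      4 * Real.pi * σ0 ^ 4 * σs ^ 2 := by
    have he : (σ0 ^ 2) ^ 2 = σ0 ^ 4 := by ring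
    constructor
    · intro h
      have h2 : (σ0 ^ 2) ^ 2 ≤ R ^ 2 := pow_le_pow_left₀ hA.le h 2
      rw [hR2, ← hrhs] at h2
      linarith
    · intro h
      apply le_of_pow_le_pow_left₀ two_ne_zero hRpos.le
      rw [hR2, ← hrhs]
      linarith
  have hAR' : (σ0 ^ 2 < R) ↔ σ0 ^ 4 < 2 * Real.pi * (σ0 ^ 2 + σh ^ 2) * (σs ^ 2) ^ 2 +
      4 * Real.pi * σ0 ^ 4 * σs ^ 2 := by
    have he : (σ0 ^ 2) ^ 2 = σ0 ^ 4 := by ring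
    constructor
    · intro h
      have h2 : (σ0 ^ 2) ^ 2 < R ^ 2 := pow_lt_pow_left₀ h hA.le two_ne_zero
      rw [hR2, ← hrhs] at h2
      linarith
    · intro h
      apply lt_of_pow_lt_pow_left₀ 2 hRpos.le
      rw [hR2, ← hrhs]
      linarith
  have hkle : k ≤ 1 ↔ c ≤ σs ^ 2 := by
    rw [hk, div_le_one hRpos, hAR]
    exact hquad.1
  have hklt : k < 1 ↔ c < σs ^ 2 := by
    rw [hk, div_lt_one hRpos, hAR']
    exact hquad.2
  refine ⟨hsup_iff.trans hkle, fun hstrict => ?_⟩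
  have hk1 : k < 1 := hklt.2 hstrict
  set L : NNReal := ⟨k, hkpos.le⟩ with hLdef
  have hL1 : L < 1 := by
    rw [← NNReal.coe_lt_coe]
    exact_mod_cast hk1
  have hLip : LipschitzWith L g := by
    apply lipschitzWith_of_nnnorm_deriv_le (fun x => (hderiv x).differentiableAt)
    intro x
    rw [← NNReal.coe_le_coe, coe_nnnorm, Real.norm_eq_abs]
    exact hbound x
  have hCW : ContractingWith L g := ⟨hL1, hLip⟩
  have hfix := hCW.fixedPoint_isFixedPt
  refine ⟨⟨L, hL1, hLip⟩, ContractingWith.fixedPoint g hCW, hfix, ?_, 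
    fun μ' h' => hCW.fixedPoint_unique h', hCW.tendsto_iterate_fixedPoint⟩
  have heq : ContractingWith.fixedPoint g hCW =
      stdNormalCdf (a * ContractingWith.fixedPoint g hCW + b) := by
    conv_lhs => rw [← hfix]
    exact hgab _
  rw [heq]
  exact ⟨stdNormalCdf_pos _, stdNormalCdf_lt_one _⟩
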